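/- arXiv:2305.00055 — 2 statements merged into one kernel-verified Lean document; each statement's English description precedes it below -/
import Mathlib

section
/- Let 0<p<∞ and φ∈𝒢_p with φ(1)=1. Then the growth envelope function 𝔈_G ℳ_{φ,p}(ℝ^n) is bounded on (0,∞) if, and only if, lim_{t→0+} φ(t) > 0. -/
open MeasureTheory Filter Set ENNReal

noncomputable section

abbrev En (n : ℕ) := EuclideanSpace ℝ (Fin n)

/-- The class `𝒢_p`: nondecreasing positive functions on `(0,∞)` such that
`t ↦ φ(t) t^{-n/p}` is nonincreasing. -/
def GClass (n : ℕ) (p : ℝ) (φ : ℝ → ℝ) : Prop :=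
  (∀ t : ℝ, 0 < t → 0 < φ t) ∧
    ∀ t r : ℝ, 0 < t → t ≤ r → φ t ≤ φ r ∧ φ r ≤ φ t * (r / t) ^ ((n : ℝ) / p)

/-- The axis-parallel compact cube centred at `x` with side length `r`. -/
def cube (n : ℕ) (x : En n) (r : ℝ) : Set (En n) := {y | ∀ i, |y i - x i| ≤ r / 2}

/-- The generalised Morrey quasi-norm `‖f | ℳ_{φ,p}(ℝⁿ)‖`. -/
def morreyNorm {F : Type*} [NormedAddCommGroup F] (n : ℕ) (p : ℝ) (φ : ℝ → ℝ)
    (f : En n → F) : ℝ≥0∞ :=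
  ⨆ (x : En n) (r : ℝ) (_ : 0 < r),
    ENNReal.ofReal (φ r) *
      ((volume (cube n x r))⁻¹ *
        ∫⁻ y in cube n x r, ENNReal.ofReal (‖f y‖ ^ p)) ^ (1 / p)

/-- The decreasing rearrangement `f*(t) = inf{σ>0 : |{x : |f(x)|>σ}| ≤ t}`. -/
def rearr {F : Type*} [NormedAddCommGroup F] (n : ℕ) (f : En n → F) (t : ℝ) : ℝ≥0∞ :=
  sInf {σ : ℝ≥0∞ | 0 < σ ∧ volume {x : En n | σ < ENNReal.ofReal ‖f x‖} ≤ ENNReal.ofReal t}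

/-- The growth envelope function of the generalised Morrey space `ℳ_{φ,p}(ℝⁿ)`. -/
def morreyEnvelope (n : ℕ) (p : ℝ) (φ : ℝ → ℝ) (t : ℝ) : ℝ≥0∞ :=
  ⨆ (f : En n → ℝ) (_ : Measurable f) (_ : morreyNorm n p φ f ≤ 1), rearr n f t

end

noncomputable section Helpers

lemma cube_eq (n : ℕ) (x : En n) (r : ℝ) :
    cube n x r = (MeasurableEquiv.toLp 2 (Fin n → ℝ)).symm ⁻¹'
      (Set.univ.pi fun i => Icc (x i - r/2) (x i + r/2)) := by
  ext y
  simp only [cube, mem_setOf_eq, mem_preimage, MeasurableEquiv.coe_toLp_symm,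
    Set.mem_pi, mem_univ, forall_true_left, mem_Icc, abs_le]
  constructor
  · intro h i; have := h i; constructor <;> [linarith [this.1]; linarith [this.2]]
  · intro h i; have := h i; constructor <;> [linarith [this.1]; linarith [this.2]]

lemma measurableSet_cube {n : ℕ} {x : En n} {r : ℝ} : MeasurableSet (cube n x r) := by
  rw [cube_eq]
  exact (MeasurableEquiv.toLp 2 (Fin n → ℝ)).symm.measurable
    (MeasurableSet.univ_pi fun i => measurableSet_Icc)

lemma volume_cube {n : ℕ} (x : En n) {r : ℝ} (hr : 0 ≤ r) :
    volume (cube n x r) = ENNReal.ofReal (r ^ n) := by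
  rw [cube_eq, (EuclideanSpace.volume_preserving_symm_measurableEquiv_toLp (Fin n)).measure_preimage
    (MeasurableSet.univ_pi fun i => measurableSet_Icc).nullMeasurableSet, volume_pi_pi]
  have : ∀ i : Fin n, volume (Icc (x i - r/2) (x i + r/2)) = ENNReal.ofReal r := by
    intro i; rw [Real.volume_Icc]; ring_nf
  simp only [this, Finset.prod_const, Finset.card_univ, Fintype.card_fin,
    ← ENNReal.ofReal_pow hr]

lemma closedBall_subset_cube {n : ℕ} (x : En n) {ρ : ℝ} :
    Metric.closedBall x ρ ⊆ cube n x (2*ρ) := by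
  intro y hy i
  have h1 : |y i - x i| ≤ ‖y - x‖ := by
    rw [EuclideanSpace.norm_eq]
    have h2 : |y i - x i| = Real.sqrt (‖(y - x) i‖ ^ 2) := by
      simp [Real.sqrt_sq_eq_abs]
    rw [h2]
    apply Real.sqrt_le_sqrt
    exact Finset.single_le_sum (f := fun j => ‖(y - x) j‖ ^ 2)
      (fun j _ => sq_nonneg _) (Finset.mem_univ i)
  have h3 : ‖y - x‖ ≤ ρ := by
    rw [← dist_eq_norm]; exact hy
  calc |y i - x i| ≤ ρ := h1.trans h3
    _ = 2 * ρ / 2 := by ring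

lemma gclass_tendsto_sInf {n : ℕ} {p : ℝ} {φ : ℝ → ℝ} (hφ : GClass n p φ) :
    Tendsto φ (nhdsWithin 0 (Set.Ioi 0)) (nhds (sInf (φ '' Ioi 0))) := by
  have hbdd : BddBelow (φ '' Ioi 0) := ⟨0, by rintro y ⟨t, ht, rfl⟩; exact (hφ.1 t ht).le⟩
  rw [tendsto_order]
  constructor
  · intro a ha
    filter_upwards [self_mem_nhdsWithin] with t ht
    exact lt_of_lt_of_le ha (csInf_le hbdd ⟨t, ht, rfl⟩)
  · intro b hb
    obtain ⟨y, ⟨t0, ht0, rfl⟩, hy⟩ :=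
      exists_lt_of_csInf_lt (⟨φ 1, ⟨1, mem_Ioi.2 one_pos, rfl⟩⟩ : (φ '' Ioi 0).Nonempty) hb
    have h1 : Iio t0 ∈ nhds (0:ℝ) := Iio_mem_nhds ht0
    filter_upwards [nhdsWithin_le_nhds h1, self_mem_nhdsWithin] with t h2 h3
    exact lt_of_le_of_lt (hφ.2 t t0 h3 (le_of_lt h2)).1 hy

lemma morrey_indicator_le {n : ℕ} {p : ℝ} (hp : 0 < p) {φ : ℝ → ℝ} (hφ : GClass n p φ)
    {r : ℝ} (hr : 0 < r) :
    morreyNorm n p φ ((cube n 0 r).indicator fun _ => (φ r)⁻¹) ≤ 1 := by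
  set σ : ℝ := (φ r)⁻¹ with hσdef
  have hφr : 0 < φ r := hφ.1 r hr
  have hσ : 0 < σ := inv_pos.2 hφr
  set f : En n → ℝ := (cube n 0 r).indicator fun _ => σ with hfdef
  have hfun : ∀ y, ENNReal.ofReal (‖f y‖ ^ p)
      = (cube n 0 r).indicator (fun _ => ENNReal.ofReal (σ ^ p)) y := by
    intro y
    by_cases h : y ∈ cube n 0 r <;>
      simp [hfdef, indicator, h, Real.zero_rpow hp.ne', Real.norm_eq_abs, abs_of_pos hσ]
  refine iSup_le fun x => iSup_le fun ρ => iSup_le fun hρ => ?_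
  have hint : (∫⁻ y in cube n x ρ, ENNReal.ofReal (‖f y‖ ^ p))
      = ENNReal.ofReal (σ ^ p) * volume (cube n 0 r ∩ cube n x ρ) := by
    calc (∫⁻ y in cube n x ρ, ENNReal.ofReal (‖f y‖ ^ p))
        = ∫⁻ y in cube n x ρ, (cube n 0 r).indicator (fun _ => ENNReal.ofReal (σ ^ p)) y :=
          lintegral_congr fun y => hfun y
      _ = ∫⁻ _ in cube n 0 r, ENNReal.ofReal (σ ^ p) ∂(volume.restrict (cube n x ρ)) :=
          lintegral_indicator measurableSet_cube _
      _ = ENNReal.ofReal (σ ^ p) * (volume.restrict (cube n x ρ)) (cube n 0 r) :=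
          setLIntegral_const _ _
      _ = ENNReal.ofReal (σ ^ p) * volume (cube n 0 r ∩ cube n x ρ) := by
          rw [Measure.restrict_apply measurableSet_cube]
  rw [hint, volume_cube x hρ.le]
  -- reduce to a real inequality, bounding the intersection volume by `min r ρ ^ n`
  have hVle : volume (cube n 0 r ∩ cube n x ρ) ≤ ENNReal.ofReal (min r ρ ^ n) := by
    rcases le_total r ρ with h | h
    · rw [min_eq_left h, ← volume_cube (0 : En n) hr.le]
      exact measure_mono inter_subset_left
    · rw [min_eq_right h, ← volume_cube x hρ.le]
      exact measure_mono inter_subset_right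
  set m : ℝ := min r ρ with hm
  have hm0 : 0 < m := lt_min hr hρ
  have hρn : (0:ℝ) < ρ ^ n := pow_pos hρ n
  calc ENNReal.ofReal (φ ρ) *
        ((ENNReal.ofReal (ρ ^ n))⁻¹ *
          (ENNReal.ofReal (σ ^ p) * volume (cube n 0 r ∩ cube n x ρ))) ^ (1 / p)
      ≤ ENNReal.ofReal (φ ρ) *
        ((ENNReal.ofReal (ρ ^ n))⁻¹ *
          (ENNReal.ofReal (σ ^ p) * ENNReal.ofReal (m ^ n))) ^ (1 / p) := by
        gcongr
    _ = ENNReal.ofReal (φ ρ * ((ρ ^ n)⁻¹ * (σ ^ p * m ^ n)) ^ (1 / p)) := by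
        rw [← ENNReal.ofReal_inv_of_pos hρn, ← ENNReal.ofReal_mul (Real.rpow_nonneg hσ.le p),
          ← ENNReal.ofReal_mul (inv_nonneg.2 hρn.le),
          ENNReal.ofReal_rpow_of_nonneg
            (by positivity) (by positivity),
          ← ENNReal.ofReal_mul (hφ.1 ρ hρ).le]
    _ ≤ 1 := by
        rw [show (1:ℝ≥0∞) = ENNReal.ofReal 1 by simp]
        apply ENNReal.ofReal_le_ofReal
        -- real inequality
        rcases le_total ρ r with h | h
        · have hmρ : m = ρ := min_eq_right h
          have h1 : ((ρ ^ n)⁻¹ * (σ ^ p * m ^ n)) = σ ^ p := by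
            rw [hmρ]; field_simp
          rw [h1, ← Real.rpow_mul hσ.le, mul_one_div, div_self hp.ne', Real.rpow_one]
          calc φ ρ * σ ≤ φ r * σ :=
                mul_le_mul_of_nonneg_right (hφ.2 ρ r hρ h).1 hσ.le
            _ = 1 := by rw [hσdef, mul_inv_cancel₀ hφr.ne']
        · have hmr : m = r := min_eq_left h
          have key : ((ρ ^ n)⁻¹ * (σ ^ p * m ^ n)) ^ (1/p) = σ * (r/ρ) ^ ((n:ℝ)/p) := by
            rw [hmr]
            have e1 : (ρ ^ n)⁻¹ * (σ ^ p * r ^ n) = σ ^ p * (r/ρ) ^ n := by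
              rw [div_pow]; field_simp
            rw [e1, Real.mul_rpow (by positivity) (by positivity),
              ← Real.rpow_mul hσ.le, mul_one_div, div_self hp.ne', Real.rpow_one,
              ← Real.rpow_natCast (r/ρ) n, ← Real.rpow_mul (by positivity), mul_one_div]
          rw [key]
          have h2 : φ ρ * (σ * (r/ρ) ^ ((n:ℝ)/p))
              ≤ (φ r * (ρ/r) ^ ((n:ℝ)/p)) * (σ * (r/ρ) ^ ((n:ℝ)/p)) :=
            mul_le_mul_of_nonneg_right (hφ.2 r ρ hr h).2 (by positivity)
          refine h2.trans (le_of_eq ?_)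
          have h3 : (ρ/r) ^ ((n:ℝ)/p) * (r/ρ) ^ ((n:ℝ)/p) = 1 := by
            rw [← Real.mul_rpow (by positivity) (by positivity),
              show (ρ/r) * (r/ρ) = 1 by field_simp, Real.one_rpow]
          calc φ r * (ρ/r) ^ ((n:ℝ)/p) * (σ * (r/ρ) ^ ((n:ℝ)/p))
              = (φ r * σ) * ((ρ/r) ^ ((n:ℝ)/p) * (r/ρ) ^ ((n:ℝ)/p)) := by ring
            _ = 1 := by rw [h3, hσdef, mul_inv_cancel₀ hφr.ne', one_mul]

end Helpers

noncomputable section Bounded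

lemma envelope_bounded {n : ℕ} (hn : 0 < n) {p : ℝ} (hp : 0 < p) {φ : ℝ → ℝ}
    (hφ : GClass n p φ) {c : ℝ} (hc : 0 < c) (hcle : ∀ t : ℝ, 0 < t → c ≤ φ t) :
    ∃ C : ℝ≥0∞, C ≠ ⊤ ∧ ∀ t : ℝ, 0 < t → morreyEnvelope n p φ t ≤ C := by
  classical
  set B1 : ℝ≥0∞ := volume (Metric.closedBall (0 : En n) 1) with hB1
  have hB1pos : 0 < B1 := Metric.measure_closedBall_pos _ _ one_pos
  have hB1top : B1 ≠ ⊤ := (measure_closedBall_lt_top).ne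
  have hc0 : ENNReal.ofReal c ≠ 0 := by simp [hc]
  set K : ℝ≥0∞ := (ENNReal.ofReal c)⁻¹ ^ p * ENNReal.ofReal ((2:ℝ) ^ n) * B1⁻¹ with hK
  have hKtop : K ≠ ⊤ := by
    apply ENNReal.mul_ne_top (ENNReal.mul_ne_top ?_ ofReal_ne_top)
      (ENNReal.inv_ne_top.2 hB1pos.ne')
    exact ENNReal.rpow_ne_top_of_nonneg hp.le (ENNReal.inv_ne_top.2 hc0)
  refine ⟨K ^ (1/p) + 1, ?_, ?_⟩
  · exact ENNReal.add_ne_top.2 ⟨ENNReal.rpow_ne_top_of_nonneg (by positivity) hKtop, one_ne_top⟩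
  intro t ht
  refine iSup_le fun f => iSup_le fun hf => iSup_le fun hnorm => ?_
  set g : En n → ℝ≥0∞ := fun y => ENNReal.ofReal (‖f y‖ ^ p) with hg
  have hgmeas : Measurable g :=
    ENNReal.measurable_ofReal.comp ((Real.continuous_rpow_const hp.le).measurable.comp hf.norm)
  -- Step 1: cube bound
  have hcube : ∀ (x : En n) (ρ : ℝ), 0 < ρ →
      (∫⁻ y in cube n x ρ, g y) ≤ (ENNReal.ofReal c)⁻¹ ^ p * ENNReal.ofReal (ρ ^ n) := by
    intro x ρ hρ
    have hterm : ENNReal.ofReal (φ ρ) *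
        ((volume (cube n x ρ))⁻¹ * ∫⁻ y in cube n x ρ, g y) ^ (1/p) ≤ 1 := by
      refine le_trans ?_ hnorm
      exact le_iSup_of_le x (le_iSup_of_le ρ (le_iSup_of_le hρ le_rfl))
    set X : ℝ≥0∞ := (volume (cube n x ρ))⁻¹ * ∫⁻ y in cube n x ρ, g y with hX
    have h1 : ENNReal.ofReal c * X ^ (1/p) ≤ 1 :=
      le_trans (mul_le_mul_left (ENNReal.ofReal_le_ofReal (hcle ρ hρ)) _) hterm
    have h2 : X ^ (1/p) ≤ (ENNReal.ofReal c)⁻¹ :=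
      ENNReal.le_inv_iff_mul_le.2 (by rwa [mul_comm])
    have h3 : X ≤ (ENNReal.ofReal c)⁻¹ ^ p := by
      have := ENNReal.rpow_le_rpow h2 hp.le
      rwa [← ENNReal.rpow_mul, one_div_mul_cancel hp.ne', ENNReal.rpow_one] at this
    have hρn : (0:ℝ) < ρ ^ n := pow_pos hρ n
    have hvol : volume (cube n x ρ) = ENNReal.ofReal (ρ ^ n) := volume_cube x hρ.le
    have h4 : (∫⁻ y in cube n x ρ, g y) = ENNReal.ofReal (ρ ^ n) * X := by
      rw [hX, hvol, ← mul_assoc, ENNReal.mul_inv_cancel (by simp [hρn]) ofReal_ne_top, one_mul]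
    rw [h4, mul_comm]
    exact mul_le_mul_left h3 _
  -- Step 2: ball bound
  have hball : ∀ (x : En n) (ρ : ℝ), 0 < ρ →
      (∫⁻ y in Metric.closedBall x ρ, g y) ≤ K * volume (Metric.closedBall x ρ) := by
    intro x ρ hρ
    have h1 : (∫⁻ y in Metric.closedBall x ρ, g y) ≤ ∫⁻ y in cube n x (2*ρ), g y :=
      lintegral_mono_set (closedBall_subset_cube x)
    have h2 := hcube x (2*ρ) (by positivity)
    have hvolball : volume (Metric.closedBall x ρ) = ENNReal.ofReal (ρ ^ n) * B1 := by
      rw [hB1, Measure.addHaar_closedBall' volume x hρ.le, finrank_euclideanSpace_fin]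
    rw [hvolball]
    refine h1.trans (h2.trans (le_of_eq ?_))
    have h3 : ((2:ℝ)*ρ) ^ n = 2 ^ n * ρ ^ n := mul_pow 2 ρ n
    rw [h3, ENNReal.ofReal_mul (by positivity), hK]
    have : (ENNReal.ofReal c)⁻¹ ^ p * ENNReal.ofReal ((2:ℝ) ^ n) * B1⁻¹ *
        (ENNReal.ofReal (ρ ^ n) * B1)
        = (ENNReal.ofReal c)⁻¹ ^ p * (ENNReal.ofReal ((2:ℝ) ^ n) * ENNReal.ofReal (ρ ^ n))
          * (B1⁻¹ * B1) := by ring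
    rw [this, ENNReal.inv_mul_cancel hB1pos.ne' hB1top, mul_one]
  -- Step 3: density argument; a.e. bound g ≤ K
  have hwd : ∀ s : Set (En n), (volume.withDensity g) s ≤ K * volume s := by
    intro s
    have hsm : ((K.toNNReal : ℝ≥0∞)) = K := ENNReal.coe_toNNReal hKtop
    have := (Besicovitch.vitaliFamily (volume : Measure (En n))).measure_le_of_frequently_le
      (K.toNNReal • volume) (withDensity_absolutelyContinuous volume g) s ?_
    · calc (volume.withDensity g) s ≤ (K.toNNReal • volume) s := this
        _ = K * volume s := by rw [Measure.smul_apply, ENNReal.smul_def, smul_eq_mul, hsm]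
    · intro x _
      rw [VitaliFamily.frequently_filterAt_iff]
      intro ε hε
      refine ⟨Metric.closedBall x ε, ?_, Subset.rfl, ?_⟩
      · exact mem_image_of_mem _ (mem_Ioi.2 hε)
      · rw [withDensity_apply g measurableSet_closedBall, Measure.smul_apply,
          ENNReal.smul_def, smul_eq_mul, hsm]
        exact hball x ε hε
  have hnull : volume {x : En n | K < g x} = 0 := by
    have hpiece : ∀ j m : ℕ,
        volume ({x : En n | K + (j:ℝ≥0∞)⁻¹ ≤ g x} ∩ Metric.closedBall 0 (m:ℝ)) = 0 := by
      intro j m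
      set S := {x : En n | K + (j:ℝ≥0∞)⁻¹ ≤ g x} ∩ Metric.closedBall 0 (m:ℝ) with hS
      have hSmeas : MeasurableSet S :=
        (measurableSet_le measurable_const hgmeas).inter measurableSet_closedBall
      have hVtop : volume S ≠ ⊤ :=
        ((measure_mono inter_subset_right).trans_lt measure_closedBall_lt_top).ne
      by_contra hV0
      have hchain : (K + (j:ℝ≥0∞)⁻¹) * volume S ≤ K * volume S := by
        calc (K + (j:ℝ≥0∞)⁻¹) * volume S = ∫⁻ _ in S, (K + (j:ℝ≥0∞)⁻¹) ∂volume :=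
              (setLIntegral_const _ _).symm
          _ ≤ ∫⁻ y in S, g y ∂volume := setLIntegral_mono hgmeas fun y hy => hy.1
          _ = (volume.withDensity g) S := (withDensity_apply g hSmeas).symm
          _ ≤ K * volume S := hwd S
      have hle : K + (j:ℝ≥0∞)⁻¹ ≤ K :=
        (ENNReal.mul_le_mul_iff_left hV0 hVtop).1 hchain
      exact absurd hle (not_le.2 (ENNReal.lt_add_right hKtop
        (ENNReal.inv_ne_zero.2 (ENNReal.natCast_ne_top j))))
    have hsub : {x : En n | K < g x} ⊆
        ⋃ j : ℕ, ⋃ m : ℕ, ({x : En n | K + (j:ℝ≥0∞)⁻¹ ≤ g x} ∩ Metric.closedBall 0 (m:ℝ)) := by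
      intro x hx
      have hj : ∃ j : ℕ, K + (j:ℝ≥0∞)⁻¹ ≤ g x := by
        by_cases hgx : g x = ⊤
        · exact ⟨0, by simp [hgx]⟩
        · have hpos : g x - K ≠ 0 := by
            rw [Ne, tsub_eq_zero_iff_le]; exact not_le.2 hx
          obtain ⟨j, hj⟩ := ENNReal.exists_inv_nat_lt hpos
          exact ⟨j, by
            calc K + (j:ℝ≥0∞)⁻¹ ≤ K + (g x - K) := add_le_add le_rfl hj.le
              _ = g x := add_tsub_cancel_of_le (le_of_lt hx)⟩
      obtain ⟨j, hj⟩ := hj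
      refine mem_iUnion.2 ⟨j, mem_iUnion.2 ⟨⌈‖x‖⌉₊, hj, ?_⟩⟩
      rw [Metric.mem_closedBall, dist_zero_right]
      exact Nat.le_ceil _
    exact le_antisymm ((measure_mono hsub).trans
      (le_of_eq (measure_iUnion_null fun j => measure_iUnion_null fun m => hpiece j m)))
      zero_le
  -- Step 4: conclude
  apply sInf_le
  constructor
  · exact lt_of_lt_of_le zero_lt_one le_add_self
  · refine le_trans (measure_mono ?_) (by rw [hnull]; exact zero_le)
    intro y hy
    have h1 : K ^ (1/p) < ENNReal.ofReal ‖f y‖ := lt_of_le_of_lt le_self_add hy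
    show K < g y
    have h2 : g y = (ENNReal.ofReal ‖f y‖) ^ p := by
      rw [hg]; exact (ENNReal.ofReal_rpow_of_nonneg (norm_nonneg _) hp.le).symm
    have h3 : K = (K ^ (1/p)) ^ p := by
      rw [← ENNReal.rpow_mul, one_div_mul_cancel hp.ne', ENNReal.rpow_one]
    rw [h2, h3]
    exact ENNReal.rpow_lt_rpow h1 hp

end Bounded

noncomputable section Final

lemma rearr_indicator_ge {n : ℕ} {r t σ : ℝ} (hr : 0 < r) (hσ : 0 < σ) (ht : t < r ^ n) :
    ENNReal.ofReal σ ≤ rearr n ((cube n 0 r).indicator fun _ => σ) t := by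
  apply le_sInf
  rintro σ' ⟨hσ'0, hσ'⟩
  by_contra hlt
  push_neg at hlt
  have hsub : cube n 0 r ⊆
      {x : En n | σ' < ENNReal.ofReal ‖(cube n 0 r).indicator (fun _ => σ) x‖} := by
    intro y hy
    simp only [mem_setOf_eq, indicator_of_mem hy, Real.norm_eq_abs, abs_of_pos hσ]
    exact hlt
  have hle := (measure_mono hsub).trans hσ'
  rw [volume_cube _ hr.le] at hle
  exact absurd hle (not_le.2 ((ENNReal.ofReal_lt_ofReal_iff (by positivity)).2 ht))

theorem statement0_aux (n : ℕ) (hn : 0 < n) (p : ℝ) (hp : 0 < p) (φ : ℝ → ℝ)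
    (hφ : GClass n p φ) (hφ1 : φ 1 = 1) :
    (∃ C : ℝ≥0∞, C ≠ ⊤ ∧ ∀ t : ℝ, 0 < t → morreyEnvelope n p φ t ≤ C) ↔
      ∃ c : ℝ, 0 < c ∧ Filter.Tendsto φ (nhdsWithin 0 (Set.Ioi 0)) (nhds c) := by
  constructor
  · rintro ⟨C, hCtop, hC⟩
    refine ⟨sInf (φ '' Ioi 0), ?_, gclass_tendsto_sInf hφ⟩
    by_contra hL
    push_neg at hL
    have hL0 : sInf (φ '' Ioi 0) = 0 := by
      refine le_antisymm hL (le_csInf ⟨φ 1, ⟨1, mem_Ioi.2 one_pos, rfl⟩⟩ ?_)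
      rintro y ⟨s, hs, rfl⟩
      exact (hφ.1 s hs).le
    have htend : Tendsto φ (nhdsWithin 0 (Set.Ioi 0)) (nhds 0) := by
      have := gclass_tendsto_sInf hφ; rwa [hL0] at this
    set M : ℝ := C.toReal + 1 with hM
    have hM0 : 0 < M := by positivity
    have hCM : C < ENNReal.ofReal M := by
      conv_lhs => rw [← ENNReal.ofReal_toReal hCtop]
      exact (ENNReal.ofReal_lt_ofReal_iff hM0).2 (lt_add_one _)
    have hev : ∀ᶠ s in nhdsWithin (0:ℝ) (Set.Ioi 0), φ s < 1/M :=
      htend.eventually (gt_mem_nhds (by positivity))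
    obtain ⟨r, hφr, hr⟩ := (hev.and self_mem_nhdsWithin).exists
    have hφrpos : 0 < φ r := hφ.1 r hr
    have hMσ : M < (φ r)⁻¹ := by
      have h1 : φ r * M < 1 := by
        have := mul_lt_mul_of_pos_right hφr hM0
        rwa [one_div, inv_mul_cancel₀ hM0.ne'] at this
      nlinarith [mul_inv_cancel₀ hφrpos.ne', inv_pos.2 hφrpos]
    set t : ℝ := r ^ n / 2 with htdef
    have hrn : (0:ℝ) < r ^ n := pow_pos hr n
    have ht0 : 0 < t := by positivity
    have htlt : t < r ^ n := by rw [htdef]; linarith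
    set f : En n → ℝ := (cube n 0 r).indicator fun _ => (φ r)⁻¹ with hfdef
    have hfm : Measurable f := measurable_const.indicator measurableSet_cube
    have hfn : morreyNorm n p φ f ≤ 1 := morrey_indicator_le hp hφ hr
    have henv : ENNReal.ofReal ((φ r)⁻¹) ≤ morreyEnvelope n p φ t := by
      refine le_trans (rearr_indicator_ge hr (inv_pos.2 hφrpos) htlt) ?_
      exact le_iSup_of_le f (le_iSup_of_le hfm (le_iSup_of_le hfn le_rfl))
    have : ENNReal.ofReal ((φ r)⁻¹) ≤ C := henv.trans (hC t ht0)
    exact absurd this (not_le.2 (hCM.trans_le (ENNReal.ofReal_le_ofReal hMσ.le)))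
  · rintro ⟨c, hc, htend⟩
    have hcle : ∀ s : ℝ, 0 < s → c ≤ φ s := by
      intro s hs
      refine le_of_tendsto htend ?_
      have h1 : Iio s ∈ nhds (0:ℝ) := Iio_mem_nhds hs
      filter_upwards [nhdsWithin_le_nhds h1, self_mem_nhdsWithin] with u h2 h3
      exact (hφ.2 u s h3 (le_of_lt h2)).1
    exact envelope_bounded hn hp hφ hc hcle

end Final


/-- For `0<p<∞` and `φ ∈ 𝒢_p` with `φ(1)=1`, the growth envelope function
of `ℳ_{φ,p}(ℝⁿ)` is bounded on `(0,∞)` iff `lim_{t→0⁺} φ(t) > 0`. -/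
theorem statement0 (n : ℕ) (hn : 0 < n) (p : ℝ) (hp : 0 < p) (φ : ℝ → ℝ)
    (hφ : GClass n p φ) (hφ1 : φ 1 = 1) :
    (∃ C : ℝ≥0∞, C ≠ ⊤ ∧ ∀ t : ℝ, 0 < t → morreyEnvelope n p φ t ≤ C) ↔
      ∃ c : ℝ, 0 < c ∧ Filter.Tendsto φ (nhdsWithin 0 (Set.Ioi 0)) (nhds c) :=
  statement0_aux n hn p hp φ hφ hφ1
end

section
/- Let 0<p<∞ and φ∈𝒢_p with φ(1)=1 and lim_{t→0+} φ(t)=0. Let A_1,…,A_m be pairwise disjoint measurable subsets of ℝ^n of finite measure, let a_1>a_2>…>a_m>0, and let f = Σ_{j=1}^m a_j · χ_{A_j} be a simple function with ‖f|L_p(ℝ^n)‖ = 1. Then there exists a simple function g on ℝ^n such that g*(t) = f*(t) for all t>0 and ‖g|ℳ_{φ,p}(ℝ^n)‖ ≤ 1. -/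
open MeasureTheory Filter Set ENNReal

noncomputable section Aux

open Finset in
/-- Injectivity of the pairing `(j, i) ↦ i * m + j` for `j < m`. -/
lemma pair_inj {m : ℕ} {j j' : Fin m} {i i' : ℕ}
    (h : i * m + j.val = i' * m + j'.val) : j = j' ∧ i = i' := by
  have e1 : ∀ (k : ℕ) (jj : Fin m), (k * m + jj.val) % m = jj.val := by
    intro k jj
    rw [Nat.add_comm, Nat.add_mul_mod_self_right, Nat.mod_eq_of_lt jj.isLt]
  have h1 : j.val = j'.val := by
    have h2 := congrArg (· % m) h
    simpa [e1] using h2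
  refine ⟨Fin.ext h1, ?_⟩
  rw [h1] at h
  have h3 : i * m = i' * m := by omega
  exact Nat.eq_of_mul_eq_mul_right j.pos h3

/-- Volume (and measurability) of a box in `En n`. -/
lemma box_vol (n : ℕ) (I : Fin n → Set ℝ) (hI : ∀ l, MeasurableSet (I l)) :
    MeasurableSet {y : En n | ∀ l, y l ∈ I l} ∧
    volume {y : En n | ∀ l, y l ∈ I l} = ∏ l, volume (I l) := by
  have hps : MeasurableSet (Set.pi Set.univ I) := MeasurableSet.univ_pi hI
  have h : {y : En n | ∀ l, y l ∈ I l}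
      = (MeasurableEquiv.toLp 2 (Fin n → ℝ)).symm ⁻¹' (Set.pi Set.univ I) := by
    ext y
    simp [Set.mem_pi]
  constructor
  · rw [h]; exact (MeasurableEquiv.toLp 2 (Fin n → ℝ)).symm.measurable hps
  · rw [h, (EuclideanSpace.volume_preserving_symm_measurableEquiv_toLp
      (Fin n)).measure_preimage hps.nullMeasurableSet, volume_pi_pi]

lemma prod_ite_pow {n : ℕ} (hn : 0 < n) (fz : Fin n) (c1 c2 : ℝ≥0∞) :
    (∏ l : Fin n, (if l = fz then c1 else c2)) = c1 * c2 ^ (n - 1) := by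
  rw [← Finset.mul_prod_erase Finset.univ _ (Finset.mem_univ fz), if_pos rfl]
  congr 1
  rw [Finset.prod_congr rfl (fun l hl => if_neg (Finset.ne_of_mem_erase hl)),
    Finset.prod_const, Finset.card_erase_of_mem (Finset.mem_univ fz), Finset.card_univ,
    Fintype.card_fin]

lemma Icc_inter_vol_le (a b c d : ℝ) :
    volume (Set.Icc a b ∩ Set.Icc c d) ≤ ENNReal.ofReal (min (b - a) (d - c)) := by
  rcases le_total (b - a) (d - c) with h | h
  · rw [min_eq_left h]
    exact (measure_mono Set.inter_subset_left).trans (le_of_eq Real.volume_Icc)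
  · rw [min_eq_right h]
    exact (measure_mono Set.inter_subset_right).trans (le_of_eq Real.volume_Icc)

/-- The key scalar inequality in the case `r ≤ 1`. -/
lemma real_key {n : ℕ} {p : ℝ} (hp : 0 < p) {φ : ℝ → ℝ} (hφ : GClass n p φ)
    {r ε amax : ℝ} (hr : 0 < r) (hε : 0 < ε) (hamax : 0 < amax)
    (hkey : φ ε * amax ≤ 1) :
    φ r * (((r ^ n)⁻¹ * (amax ^ p * (min ε r) ^ n)) ^ (1 / p)) ≤ 1 := by
  have hφr := hφ.1 r hr
  have hφε := hφ.1 ε hε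
  have hmin : 0 ≤ min ε r := le_min hε.le hr.le
  set X : ℝ := (r ^ n)⁻¹ * (amax ^ p * (min ε r) ^ n) with hX
  have hX0 : 0 ≤ X := by positivity
  have hY0 : 0 ≤ φ r * X ^ (1 / p) := by positivity
  have hYp : (φ r * X ^ (1 / p)) ^ p = (φ r) ^ p * X := by
    rw [Real.mul_rpow hφr.le (by positivity), one_div, Real.rpow_inv_rpow hX0 hp.ne']
  have hεa : (φ ε * amax) ^ p ≤ 1 := by
    calc (φ ε * amax) ^ p ≤ 1 ^ p := Real.rpow_le_rpow (by positivity) hkey hp.le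
      _ = 1 := Real.one_rpow p
  have hgoal : (φ r) ^ p * X ≤ 1 := by
    rcases le_total r ε with hre | hre
    · have hminr : min ε r = r := min_eq_right hre
      have heq : (φ r) ^ p * X = (φ r * amax) ^ p := by
        rw [hX, hminr, Real.mul_rpow hφr.le hamax.le]
        field_simp
      rw [heq]
      calc (φ r * amax) ^ p ≤ (φ ε * amax) ^ p :=
            Real.rpow_le_rpow (by positivity)
              (mul_le_mul_of_nonneg_right (hφ.2 r ε hr hre).1 hamax.le) hp.le
        _ ≤ 1 := hεa
    · have hminr : min ε r = ε := min_eq_left hre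
      have hφrε : (φ r) ^ p ≤ (φ ε) ^ p * (r / ε) ^ n := by
        have h2 := (hφ.2 ε r hε hre).2
        have h3 := Real.rpow_le_rpow hφr.le h2 hp.le
        rwa [Real.mul_rpow hφε.le (by positivity),
          ← Real.rpow_mul (by positivity : (0:ℝ) ≤ r / ε), div_mul_cancel₀ _ hp.ne',
          Real.rpow_natCast] at h3
      calc (φ r) ^ p * X ≤ ((φ ε) ^ p * (r / ε) ^ n) * X :=
            mul_le_mul_of_nonneg_right hφrε hX0
        _ = (φ ε * amax) ^ p := by
            rw [hX, hminr, Real.mul_rpow hφε.le hamax.le, div_pow]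
            field_simp
        _ ≤ 1 := hεa
  by_contra hcon
  push_neg at hcon
  have h1 : (1 : ℝ) < (φ r * X ^ (1 / p)) ^ p := by
    have := Real.rpow_lt_rpow (by norm_num) hcon hp
    rwa [Real.one_rpow] at this
  rw [hYp] at h1
  linarith

/-- The key scalar inequality in the case `1 ≤ r`. -/
lemma real_key2 {n : ℕ} {p : ℝ} (hp : 0 < p) {φ : ℝ → ℝ} (hφ : GClass n p φ)
    (hφ1 : φ 1 = 1) {r : ℝ} (hr1 : 1 ≤ r) :
    φ r * (((r ^ n)⁻¹) ^ (1 / p)) ≤ 1 := by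
  have hr0 : (0 : ℝ) < r := lt_of_lt_of_le one_pos hr1
  have h1 : φ r ≤ r ^ ((n : ℝ) / p) := by
    have := (hφ.2 1 r one_pos hr1).2
    simpa [hφ1] using this
  have h2 : ((r ^ n)⁻¹ : ℝ) ^ (1 / p) = (r ^ ((n : ℝ) / p))⁻¹ := by
    rw [← Real.rpow_natCast r n, ← Real.rpow_neg_one (r ^ ((n : ℝ) : ℝ)),
      ← Real.rpow_mul hr0.le, ← Real.rpow_mul hr0.le, ← Real.rpow_neg_one (r ^ ((n : ℝ) / p)),
      ← Real.rpow_mul hr0.le]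
    congr 1
    ring
  rw [h2]
  have h3 : (0 : ℝ) < r ^ ((n : ℝ) / p) := Real.rpow_pos_of_pos hr0 _
  calc φ r * (r ^ ((n : ℝ) / p))⁻¹ ≤ r ^ ((n : ℝ) / p) * (r ^ ((n : ℝ) / p))⁻¹ :=
        mul_le_mul_of_nonneg_right h1 (inv_nonneg.2 h3.le)
    _ = 1 := mul_inv_cancel₀ h3.ne'

end Aux

/-- (Lemma on simple functions.) If `φ ∈ 𝒢_p`, `φ(1)=1`, `lim_{t→0⁺} φ(t)=0`,
and `f = Σ_j a_j χ_{A_j}` is a simple function with `‖f|L_p‖ = 1`, then there is a simple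
function `g` equimeasurable with `f` (same decreasing rearrangement) and `‖g|ℳ_{φ,p}‖ ≤ 1`. -/
theorem statement3 (n : ℕ) (hn : 0 < n) (p : ℝ) (hp : 0 < p) (φ : ℝ → ℝ)
    (hφ : GClass n p φ) (hφ1 : φ 1 = 1)
    (hφ0 : Filter.Tendsto φ (nhdsWithin 0 (Set.Ioi 0)) (nhds 0))
    (m : ℕ) (hm : 0 < m) (A : Fin m → Set (En n))
    (hAmeas : ∀ j, MeasurableSet (A j))
    (hAfin : ∀ j, volume (A j) ≠ ⊤)
    (hAdisj : Pairwise (Function.onFun Disjoint A))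
    (a : Fin m → ℝ) (ha_pos : ∀ j, 0 < a j)
    (ha_anti : ∀ j k : Fin m, j < k → a k < a j)
    (f : En n → ℝ) (hf : f = fun x => ∑ j, Set.indicator (A j) (fun _ => a j) x)
    (hnorm : (∫⁻ x, ENNReal.ofReal (|f x| ^ p)) = 1) :
    ∃ g : En n → ℝ, Measurable g ∧ (Set.range g).Finite ∧
      (∀ t : ℝ, 0 < t → rearr n g t = rearr n f t) ∧ morreyNorm n p φ g ≤ 1 := by
  classical
  -- the maximal value
  set amax : ℝ := a ⟨0, hm⟩ with hamaxdef
  have hamax0 : 0 < amax := ha_pos _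
  have hamax : ∀ j, a j ≤ amax := by
    intro j
    rcases Nat.eq_zero_or_pos j.val with h0 | hpos
    · have : j = ⟨0, hm⟩ := Fin.ext h0
      rw [this]
    · exact (ha_anti ⟨0, hm⟩ j (by simpa [Fin.lt_def] using hpos)).le
  -- choice of ε
  obtain ⟨ε, hεφ, hε01⟩ : ∃ ε : ℝ, φ ε < amax⁻¹ ∧ ε ∈ Set.Ioo (0:ℝ) 1 := by
    have hev : ∀ᶠ s in nhdsWithin (0:ℝ) (Set.Ioi 0), φ s < amax⁻¹ :=
      hφ0.eventually_lt_const (by positivity)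
    have hev2 : ∀ᶠ s in nhdsWithin (0:ℝ) (Set.Ioi 0), s ∈ Set.Ioo (0:ℝ) 1 :=
      eventually_of_mem (Ioo_mem_nhdsGT_of_mem ⟨le_refl 0, one_pos⟩) (fun s hs => hs)
    exact (hev.and hev2).exists
  have hε : 0 < ε := hε01.1
  have hε1 : ε ≤ 1 := hε01.2.le
  have hφεa : φ ε * amax ≤ 1 := by
    have := mul_lt_mul_of_pos_right hεφ hamax0
    rw [inv_mul_cancel₀ hamax0.ne'] at this
    exact this.le
  -- the lengths
  set v : Fin m → ℝ := fun j => (volume (A j)).toReal with hvdef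
  have hv0 : ∀ j, 0 ≤ v j := fun j => ENNReal.toReal_nonneg
  set lam : Fin m → ℝ := fun j => v j / ε ^ (n - 1) with hlamdef
  have hlam0 : ∀ j, 0 ≤ lam j := fun j => div_nonneg (hv0 j) (by positivity)
  set N : Fin m → ℕ := fun j => ⌈lam j / ε⌉₊ with hNdef
  set t : Fin m → ℝ := fun j => lam j / (N j : ℝ) with htdef
  have ht0 : ∀ j, 0 ≤ t j := fun j => div_nonneg (hlam0 j) (Nat.cast_nonneg _)
  have htε : ∀ j, t j ≤ ε := by
    intro j
    by_cases hNj : N j = 0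
    · have hz : t j = 0 := by
        simp only [htdef, hNj, Nat.cast_zero]
        exact div_zero _
      rw [hz]
      exact hε.le
    · have hNpos : (0 : ℝ) < (N j : ℝ) := by
        exact_mod_cast Nat.pos_of_ne_zero hNj
      rw [htdef, div_le_iff₀ hNpos]
      have h1 : lam j / ε ≤ (N j : ℝ) := Nat.le_ceil _
      rw [div_le_iff₀ hε] at h1
      linarith
  have hNt : ∀ j, (N j : ℝ) * t j = lam j := by
    intro j
    by_cases hNj : N j = 0
    · have : lam j / ε ≤ 0 := by
        have := Nat.ceil_eq_zero.1 hNj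
        exact this
      have hlz : lam j = 0 := le_antisymm (by
        have := (div_le_iff₀ hε).1 this
        linarith) (hlam0 j)
      simp [htdef, hNj, hlz]
    · have hNne : (N j : ℝ) ≠ 0 := by exact_mod_cast hNj
      rw [htdef, mul_div_cancel₀ _ hNne]
  -- the first coordinate
  set fz : Fin n := ⟨0, hn⟩ with hfzdef
  -- the positions and the boxes
  set L : Fin m → ℕ → ℝ := fun j i => 4 * ((i * m + j.val : ℕ) : ℝ) with hLdef
  set I : Fin m → ℕ → Fin n → Set ℝ := fun j i l =>
    if l = fz then Set.Icc (L j i) (L j i + t j) else Set.Icc 0 ε with hIdef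
  have hImeas : ∀ j i l, MeasurableSet (I j i l) := by
    intro j i l
    simp only [hIdef]
    split_ifs <;> exact measurableSet_Icc
  set B : Fin m → ℕ → Set (En n) := fun j i => {y : En n | ∀ l, y l ∈ I j i l} with hBdef
  have hBmeas : ∀ j i, MeasurableSet (B j i) := fun j i =>
    (box_vol n (I j i) (hImeas j i)).1
  have hBvol : ∀ j i, volume (B j i) =
      ENNReal.ofReal (t j) * ENNReal.ofReal ε ^ (n - 1) := by
    intro j i
    rw [hBdef, (box_vol n (I j i) (hImeas j i)).2]
    have hIvol : ∀ l, volume (I j i l) =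
        if l = fz then ENNReal.ofReal (t j) else ENNReal.ofReal ε := by
      intro l
      by_cases h : l = fz
      · simp only [hIdef, if_pos h, Real.volume_Icc, add_sub_cancel_left]
      · simp only [hIdef, if_neg h, Real.volume_Icc, sub_zero]
    rw [Finset.prod_congr rfl (fun l _ => hIvol l), prod_ite_pow hn fz]
  -- key per-index volume identity
  have hkey : ∀ j, (N j : ℝ≥0∞) * (ENNReal.ofReal (t j) * ENNReal.ofReal ε ^ (n - 1))
      = volume (A j) := by
    intro j
    have hεpow : (ε : ℝ) ^ (n - 1) ≠ 0 := by positivity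
    rw [← ENNReal.ofReal_natCast (N j), ← ENNReal.ofReal_pow hε.le,
      ← ENNReal.ofReal_mul (ht0 j), ← ENNReal.ofReal_mul (Nat.cast_nonneg _),
      ← mul_assoc, hNt j]
    have : lam j * ε ^ (n - 1) = v j := by
      rw [hlamdef]
      field_simp
    rw [this, hvdef]
    exact ENNReal.ofReal_toReal (hAfin j)
  -- separation
  have hsep : ∀ {j i j' i'} {y y' : En n}, y ∈ B j i → y' ∈ B j' i' →
      |y fz - y' fz| ≤ 1 → j = j' ∧ i = i' := by
    intro j i j' i' y y' hy hy' hd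
    have h1 : y fz ∈ Set.Icc (L j i) (L j i + t j) := by
      have := hy fz
      simpa [hIdef] using this
    have h2 : y' fz ∈ Set.Icc (L j' i') (L j' i' + t j') := by
      have := hy' fz
      simpa [hIdef] using this
    have habs := abs_le.1 hd
    have hb1 : L j i ≤ y fz ∧ y fz ≤ L j i + 1 :=
      ⟨h1.1, h1.2.trans (by linarith [htε j, hε1])⟩
    have hb2 : L j' i' ≤ y' fz ∧ y' fz ≤ L j' i' + 1 :=
      ⟨h2.1, h2.2.trans (by linarith [htε j', hε1])⟩
    have hk : i * m + j.val = i' * m + j'.val := by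
      set k := i * m + j.val with hkd
      set k' := i' * m + j'.val with hkd'
      rcases lt_trichotomy k k' with hlt | heq | hlt
      · exfalso
        have hc : (k : ℝ) + 1 ≤ (k' : ℝ) := by exact_mod_cast Nat.succ_le_of_lt hlt
        simp only [hLdef] at hb1 hb2
        linarith [habs.1, habs.2]
      · exact heq
      · exfalso
        have hc : (k' : ℝ) + 1 ≤ (k : ℝ) := by exact_mod_cast Nat.succ_le_of_lt hlt
        simp only [hLdef] at hb1 hb2
        linarith [habs.1, habs.2]
    exact pair_inj hk
  have hBdisj : ∀ {j i j' i'} {y : En n}, y ∈ B j i → y ∈ B j' i' → j = j' ∧ i = i' :=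
    fun hy hy' => hsep hy hy' (by simp)
  -- the function g
  set G : En n → ℝ := fun y =>
    ∑ j, ∑ i ∈ Finset.range (N j), (B j i).indicator (fun _ => a j) y with hGdef
  have hGmeas : Measurable G := by
    apply Finset.measurable_sum
    intro j _
    apply Finset.measurable_sum
    intro i _
    exact measurable_const.indicator (hBmeas j i)
  have hdich : ∀ y : En n, (∀ j i, i < N j → y ∉ B j i) ∨
      ∃ j i, i < N j ∧ y ∈ B j i := by
    intro y
    by_cases h : ∃ j i, i < N j ∧ y ∈ B j i
    · exact Or.inr h
    · left
      push_neg at h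
      exact h
  have hGval : ∀ (y : En n) (j0 : Fin m) (i0 : ℕ), i0 < N j0 → y ∈ B j0 i0 → G y = a j0 := by
    intro y j0 i0 hi0 hy
    show (∑ j, ∑ i ∈ Finset.range (N j), (B j i).indicator (fun _ => a j) y) = a j0
    rw [Finset.sum_eq_single j0
      (fun j _ hj => Finset.sum_eq_zero fun i _ =>
        Set.indicator_of_notMem (fun hyB => hj ((hBdisj hyB hy).1)) _)
      (fun h => absurd (Finset.mem_univ j0) h)]
    rw [Finset.sum_eq_single i0
      (fun i _ hne => Set.indicator_of_notMem (fun hyB => hne ((hBdisj hyB hy).2)) _)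
      (fun h => absurd (Finset.mem_range.2 hi0) h)]
    exact Set.indicator_of_mem hy _
  have hGzero : ∀ y : En n, (∀ j i, i < N j → y ∉ B j i) → G y = 0 := by
    intro y h
    show (∑ j, ∑ i ∈ Finset.range (N j), (B j i).indicator (fun _ => a j) y) = 0
    apply Finset.sum_eq_zero
    intro j _
    apply Finset.sum_eq_zero
    intro i hi
    exact Set.indicator_of_notMem (h j i (Finset.mem_range.1 hi)) _
  -- pointwise identity for |G|^p
  have hGpt : ∀ y : En n, ENNReal.ofReal (‖G y‖ ^ p) =
      ∑ j, ∑ i ∈ Finset.range (N j),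
        (B j i).indicator (fun _ => ENNReal.ofReal (a j ^ p)) y := by
    intro y
    rcases hdich y with h | ⟨j0, i0, hi0, hy⟩
    · rw [hGzero y h]
      rw [show ENNReal.ofReal (‖(0:ℝ)‖ ^ p) = 0 by
        simp [Real.norm_eq_abs, Real.zero_rpow hp.ne']]
      symm
      apply Finset.sum_eq_zero
      intro j _
      apply Finset.sum_eq_zero
      intro i hi
      exact Set.indicator_of_notMem (h j i (Finset.mem_range.1 hi)) _
    · rw [hGval y j0 i0 hi0 hy]
      rw [show ENNReal.ofReal (‖a j0‖ ^ p) = ENNReal.ofReal (a j0 ^ p) by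
        rw [Real.norm_eq_abs, abs_of_pos (ha_pos j0)]]
      symm
      rw [Finset.sum_eq_single j0
        (fun j _ hj => Finset.sum_eq_zero fun i _ =>
          Set.indicator_of_notMem (fun hyB => hj ((hBdisj hyB hy).1)) _)
        (fun h => absurd (Finset.mem_univ j0) h)]
      rw [Finset.sum_eq_single i0
        (fun i _ hne => Set.indicator_of_notMem (fun hyB => hne ((hBdisj hyB hy).2)) _)
        (fun h => absurd (Finset.mem_range.2 hi0) h)]
      exact Set.indicator_of_mem hy _
  -- integral of |G|^p over any set
  have hGint : ∀ Q : Set (En n), (∫⁻ y in Q, ENNReal.ofReal (‖G y‖ ^ p)) =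
      ∑ j, ∑ i ∈ Finset.range (N j),
        ENNReal.ofReal (a j ^ p) * volume (B j i ∩ Q) := by
    intro Q
    rw [lintegral_congr hGpt]
    rw [lintegral_finset_sum _ (fun j _ => Finset.measurable_sum _
      (fun i _ => measurable_const.indicator (hBmeas j i)))]
    refine Finset.sum_congr rfl fun j _ => ?_
    rw [lintegral_finset_sum _ (fun i _ => measurable_const.indicator (hBmeas j i))]
    refine Finset.sum_congr rfl fun i _ => ?_
    rw [lintegral_indicator_const (hBmeas j i), Measure.restrict_apply (hBmeas j i)]
  -- values of f
  have hfval : ∀ (x : En n) (j0 : Fin m), x ∈ A j0 → f x = a j0 := by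
    intro x j0 hx
    rw [hf]
    show (∑ j, (A j).indicator (fun _ => a j) x) = a j0
    rw [Finset.sum_eq_single j0
      (fun j _ hj => Set.indicator_of_notMem
        (fun hxA => (Set.disjoint_left.1 (hAdisj hj)) hxA hx) _)
      (fun h => absurd (Finset.mem_univ j0) h)]
    exact Set.indicator_of_mem hx _
  have hfzero : ∀ x : En n, (∀ j, x ∉ A j) → f x = 0 := by
    intro x h
    rw [hf]
    show (∑ j, (A j).indicator (fun _ => a j) x) = 0
    exact Finset.sum_eq_zero fun j _ => Set.indicator_of_notMem (h j) _
  have hfdich : ∀ x : En n, (∀ j, x ∉ A j) ∨ ∃ j, x ∈ A j := by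
    intro x
    by_cases h : ∃ j, x ∈ A j
    · exact Or.inr h
    · left; push_neg at h; exact h
  -- total integral of |f|^p
  have hfpt : ∀ x : En n, ENNReal.ofReal (|f x| ^ p) =
      ∑ j, (A j).indicator (fun _ => ENNReal.ofReal (a j ^ p)) x := by
    intro x
    rcases hfdich x with h | ⟨j0, hj0⟩
    · rw [hfzero x h]
      rw [show ENNReal.ofReal (|(0:ℝ)| ^ p) = 0 by simp [Real.zero_rpow hp.ne']]
      symm
      exact Finset.sum_eq_zero fun j _ => Set.indicator_of_notMem (h j) _
    · rw [hfval x j0 hj0, abs_of_pos (ha_pos j0)]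
      symm
      rw [Finset.sum_eq_single j0
        (fun j _ hj => Set.indicator_of_notMem
          (fun hxA => (Set.disjoint_left.1 (hAdisj hj)) hxA hj0) _)
        (fun h => absurd (Finset.mem_univ j0) h)]
      exact Set.indicator_of_mem hj0 _
  have htot : ∑ j, ENNReal.ofReal (a j ^ p) * volume (A j) = 1 := by
    rw [← hnorm, lintegral_congr hfpt,
      lintegral_finset_sum _ (fun j _ => measurable_const.indicator (hAmeas j))]
    exact Finset.sum_congr rfl fun j _ => (lintegral_indicator_const (hAmeas j) _).symm
  -- total integral of |G|^p
  have hGtot : (∫⁻ y, ENNReal.ofReal (‖G y‖ ^ p)) = 1 := by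
    have h1 := hGint Set.univ
    rw [Measure.restrict_univ] at h1
    rw [h1, ← htot]
    refine Finset.sum_congr rfl fun j _ => ?_
    rw [Finset.sum_congr rfl (fun i _ => by rw [Set.inter_univ, hBvol j i]),
      Finset.sum_const, Finset.card_range, nsmul_eq_mul, ← mul_assoc,
      mul_comm ((N j : ℝ≥0∞)) (ENNReal.ofReal (a j ^ p)), mul_assoc, hkey j]
  -- the cube as a box
  have hcube : ∀ (x : En n) (r : ℝ), cube n x r =
      {y : En n | ∀ l, y l ∈ Set.Icc (x l - r / 2) (x l + r / 2)} := by
    intro x r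
    ext y
    simp only [cube, Set.mem_setOf_eq, Set.mem_Icc]
    refine forall_congr' fun l => ?_
    rw [abs_le]
    constructor <;> rintro ⟨h1, h2⟩ <;> constructor <;> linarith
  have hQvol : ∀ (x : En n) (r : ℝ), 0 ≤ r →
      volume (cube n x r) = ENNReal.ofReal (r ^ n) := by
    intro x r hr
    rw [hcube, (box_vol n _ (fun l => measurableSet_Icc)).2]
    have h1 : ∀ l : Fin n, volume (Set.Icc (x l - r / 2) (x l + r / 2))
        = ENNReal.ofReal r := by
      intro l
      rw [Real.volume_Icc]
      congr 1
      ring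
    rw [Finset.prod_congr rfl (fun l _ => h1 l), Finset.prod_const, Finset.card_univ,
      Fintype.card_fin, ← ENNReal.ofReal_pow hr]
  -- bound on volume of box ∩ cube
  have hBQ : ∀ (j : Fin m) (i : ℕ) (x : En n) (r : ℝ), 0 ≤ r →
      volume (B j i ∩ cube n x r) ≤ ENNReal.ofReal (min ε r) ^ n := by
    intro j i x r hr
    have hbox : B j i ∩ cube n x r =
        {y : En n | ∀ l, y l ∈ (I j i l ∩ Set.Icc (x l - r / 2) (x l + r / 2))} := by
      rw [hcube, hBdef]
      ext y
      simp only [Set.mem_inter_iff, Set.mem_setOf_eq]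
      constructor
      · rintro ⟨h1, h2⟩ l
        exact ⟨h1 l, h2 l⟩
      · intro h
        exact ⟨fun l => (h l).1, fun l => (h l).2⟩
    rw [hbox, (box_vol n _ (fun l => (hImeas j i l).inter measurableSet_Icc)).2]
    calc (∏ l, volume (I j i l ∩ Set.Icc (x l - r / 2) (x l + r / 2)))
        ≤ ∏ l : Fin n, (if l = fz then ENNReal.ofReal (min (t j) r)
            else ENNReal.ofReal (min ε r)) := by
          refine Finset.prod_le_prod' fun l _ => ?_
          by_cases h : l = fz
          · rw [if_pos h, h]
            have h2 := Icc_inter_vol_le (L j i) (L j i + t j) (x fz - r / 2) (x fz + r / 2)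
            simpa [hIdef, show L j i + t j - L j i = t j by ring,
              show x fz + r / 2 - (x fz - r / 2) = r by ring] using h2
          · rw [if_neg h]
            have h2 := Icc_inter_vol_le 0 ε (x l - r / 2) (x l + r / 2)
            simpa [hIdef, h, show x l + r / 2 - (x l - r / 2) = r by ring] using h2
      _ = ENNReal.ofReal (min (t j) r) * ENNReal.ofReal (min ε r) ^ (n - 1) :=
          prod_ite_pow hn fz _ _
      _ ≤ ENNReal.ofReal (min ε r) * ENNReal.ofReal (min ε r) ^ (n - 1) :=
          mul_le_mul_left (ENNReal.ofReal_le_ofReal (min_le_min (htε j) le_rfl)) _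
      _ = ENNReal.ofReal (min ε r) ^ n := by
          rw [← pow_succ']
          congr 1
          omega
  -- the distribution identity
  have hdist : ∀ σ : ℝ≥0∞, 0 < σ →
      volume {x : En n | σ < ENNReal.ofReal ‖G x‖}
        = volume {x : En n | σ < ENNReal.ofReal ‖f x‖} := by
    intro σ hσ
    set Js : Finset (Fin m) := Finset.univ.filter (fun j => σ < ENNReal.ofReal (a j))
      with hJsdef
    have hgset : {x : En n | σ < ENNReal.ofReal ‖G x‖}
        = ⋃ s ∈ Js.sigma (fun j => Finset.range (N j)), B s.1 s.2 := by
      ext y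
      simp only [Set.mem_setOf_eq, Set.mem_iUnion, Real.norm_eq_abs]
      constructor
      · intro hσy
        rcases hdich y with h | ⟨j, i, hi, hy⟩
        · exfalso
          rw [hGzero y h] at hσy
          simp only [abs_zero, ENNReal.ofReal_zero] at hσy
          exact absurd hσy (not_lt.2 zero_le)
        · refine ⟨⟨j, i⟩, ?_, hy⟩
          rw [hGval y j i hi hy, abs_of_pos (ha_pos j)] at hσy
          exact Finset.mem_sigma.2 ⟨Finset.mem_filter.2 ⟨Finset.mem_univ _, hσy⟩,
            Finset.mem_range.2 hi⟩
      · rintro ⟨⟨j, i⟩, hmem, hy⟩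
        obtain ⟨hjJ, hi⟩ := Finset.mem_sigma.1 hmem
        rw [hGval y j i (Finset.mem_range.1 hi) hy, abs_of_pos (ha_pos j)]
        exact (Finset.mem_filter.1 hjJ).2
    have hfset : {x : En n | σ < ENNReal.ofReal ‖f x‖} = ⋃ j ∈ Js, A j := by
      ext x
      simp only [Set.mem_setOf_eq, Set.mem_iUnion, Real.norm_eq_abs]
      constructor
      · intro hσx
        rcases hfdich x with h | ⟨j, hj⟩
        · exfalso
          rw [hfzero x h] at hσx
          simp only [abs_zero, ENNReal.ofReal_zero] at hσx
          exact absurd hσx (not_lt.2 zero_le)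
        · refine ⟨j, ?_, hj⟩
          rw [hfval x j hj, abs_of_pos (ha_pos j)] at hσx
          exact Finset.mem_filter.2 ⟨Finset.mem_univ _, hσx⟩
      · rintro ⟨j, hjJ, hj⟩
        rw [hfval x j hj, abs_of_pos (ha_pos j)]
        exact (Finset.mem_filter.1 hjJ).2
    rw [hgset, hfset]
    rw [measure_biUnion_finset ?gdisj (fun s _ => hBmeas s.1 s.2),
      measure_biUnion_finset ?fdisj (fun j _ => hAmeas j)]
    case gdisj =>
      intro s hs s' hs' hne
      apply Set.disjoint_left.2
      intro y hy hy'
      obtain ⟨j, i⟩ := s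
      obtain ⟨j', i'⟩ := s'
      obtain ⟨hj, hi⟩ := hBdisj hy hy'
      exact hne (by subst hj; subst hi; rfl)
    case fdisj =>
      intro j _ j' _ hne
      exact hAdisj hne
    rw [Finset.sum_sigma]
    refine Finset.sum_congr rfl fun j _ => ?_
    rw [Finset.sum_congr rfl (fun i _ => hBvol j i), Finset.sum_const, Finset.card_range,
      nsmul_eq_mul, hkey j]
  -- assemble
  refine ⟨G, hGmeas, ?_, ?_, ?_⟩
  · -- finite range
    apply (((Set.finite_range a).insert 0)).subset
    rintro _ ⟨y, rfl⟩
    rcases hdich y with h | ⟨j, i, hi, hy⟩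
    · rw [hGzero y h]
      exact Set.mem_insert _ _
    · rw [hGval y j i hi hy]
      exact Set.mem_insert_of_mem _ ⟨j, rfl⟩
  · -- equal rearrangement
    intro τ hτ
    unfold rearr
    congr 1
    ext σ
    simp only [Set.mem_setOf_eq]
    constructor <;> rintro ⟨h1, h2⟩ <;> refine ⟨h1, ?_⟩
    · rwa [← hdist σ h1]
    · rwa [hdist σ h1]
  · -- Morrey norm bound
    rw [morreyNorm]
    refine iSup_le fun x => iSup_le fun r => iSup_le fun hr => ?_
    rcases le_total r 1 with hr1 | hr1
    · -- small cubes
      have hIle : (∫⁻ y in cube n x r, ENNReal.ofReal (‖G y‖ ^ p))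
          ≤ ENNReal.ofReal (amax ^ p * (min ε r) ^ n) := by
        rw [hGint]
        have hmin0 : 0 ≤ min ε r := le_min hε.le hr.le
        by_cases hex : ∃ j i, i < N j ∧ (B j i ∩ cube n x r).Nonempty
        · obtain ⟨j0, i0, hi0, hne⟩ := hex
          obtain ⟨y0, hy0⟩ := hne
          have huniq : ∀ j i, ¬(j = j0 ∧ i = i0) → B j i ∩ cube n x r = ∅ := by
            intro j i hne2
            rw [Set.eq_empty_iff_forall_notMem]
            intro y hy
            have hyc : |y fz - y0 fz| ≤ 1 := by
              have h1 := hy.2 fz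
              have h2 := hy0.2 fz
              have h3 : |y fz - y0 fz| ≤ |y fz - x fz| + |x fz - y0 fz| :=
                abs_sub_le _ _ _
              have h4 : |x fz - y0 fz| = |y0 fz - x fz| := abs_sub_comm _ _
              rw [h4] at h3
              linarith
            exact hne2 (hsep hy.1 hy0.1 hyc)
          have hsum : (∑ j, ∑ i ∈ Finset.range (N j),
              ENNReal.ofReal (a j ^ p) * volume (B j i ∩ cube n x r))
              = ENNReal.ofReal (a j0 ^ p) * volume (B j0 i0 ∩ cube n x r) := by
            rw [Finset.sum_eq_single j0
              (fun j _ hj => Finset.sum_eq_zero fun i _ => by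
                rw [huniq j i (fun hc => hj hc.1), measure_empty, mul_zero])
              (fun h => absurd (Finset.mem_univ j0) h)]
            exact Finset.sum_eq_single i0
              (fun i _ hne3 => by
                rw [huniq j0 i (fun hc => hne3 hc.2), measure_empty, mul_zero])
              (fun h => absurd (Finset.mem_range.2 hi0) h)
          rw [hsum]
          calc ENNReal.ofReal (a j0 ^ p) * volume (B j0 i0 ∩ cube n x r)
              ≤ ENNReal.ofReal (amax ^ p) * ENNReal.ofReal ((min ε r) ^ n) := by
                apply mul_le_mul'
                · exact ENNReal.ofReal_le_ofReal
                    (Real.rpow_le_rpow (ha_pos j0).le (hamax j0) hp.le)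
                · rw [ENNReal.ofReal_pow hmin0]
                  exact hBQ j0 i0 x r hr.le
            _ = ENNReal.ofReal (amax ^ p * (min ε r) ^ n) :=
                (ENNReal.ofReal_mul (by positivity)).symm
        · push_neg at hex
          have hz : ∀ j ∈ Finset.univ, (∑ i ∈ Finset.range (N j),
              ENNReal.ofReal (a j ^ p) * volume (B j i ∩ cube n x r)) = 0 := by
            intro j _
            apply Finset.sum_eq_zero
            intro i hi
            rw [hex j i (Finset.mem_range.1 hi), measure_empty, mul_zero]
          rw [Finset.sum_eq_zero hz]
          exact zero_le
      calc ENNReal.ofReal (φ r) * ((volume (cube n x r))⁻¹ *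
            ∫⁻ y in cube n x r, ENNReal.ofReal (‖G y‖ ^ p)) ^ (1 / p)
          ≤ ENNReal.ofReal (φ r) * ((ENNReal.ofReal (r ^ n))⁻¹ *
              ENNReal.ofReal (amax ^ p * (min ε r) ^ n)) ^ (1 / p) := by
            apply mul_le_mul_right
            apply ENNReal.rpow_le_rpow _ (by positivity)
            rw [hQvol x r hr.le]
            exact mul_le_mul_right hIle _
        _ = ENNReal.ofReal (φ r * (((r ^ n)⁻¹ *
              (amax ^ p * (min ε r) ^ n)) ^ (1 / p))) := by
            have hmin0 : 0 ≤ min ε r := le_min hε.le hr.le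
            rw [← ENNReal.ofReal_inv_of_pos (by positivity),
              ← ENNReal.ofReal_mul (by positivity),
              ENNReal.ofReal_rpow_of_nonneg (by positivity) (by positivity),
              ← ENNReal.ofReal_mul (hφ.1 r hr).le]
        _ ≤ 1 := by
            rw [← ENNReal.ofReal_one]
            exact ENNReal.ofReal_le_ofReal (real_key hp hφ hr hε hamax0 hφεa)
    · -- large cubes
      have hr0 : 0 < r := lt_of_lt_of_le one_pos hr1
      have hIle : (∫⁻ y in cube n x r, ENNReal.ofReal (‖G y‖ ^ p)) ≤ 1 :=
        (setLIntegral_le_lintegral _ _).trans (le_of_eq hGtot)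
      calc ENNReal.ofReal (φ r) * ((volume (cube n x r))⁻¹ *
            ∫⁻ y in cube n x r, ENNReal.ofReal (‖G y‖ ^ p)) ^ (1 / p)
          ≤ ENNReal.ofReal (φ r) * ((ENNReal.ofReal (r ^ n))⁻¹ * 1) ^ (1 / p) := by
            apply mul_le_mul_right
            apply ENNReal.rpow_le_rpow _ (by positivity)
            rw [hQvol x r hr0.le]
            exact mul_le_mul_right hIle _
        _ = ENNReal.ofReal (φ r * (((r ^ n)⁻¹) ^ (1 / p))) := by
            rw [mul_one, ← ENNReal.ofReal_inv_of_pos (by positivity),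
              ENNReal.ofReal_rpow_of_nonneg (by positivity) (by positivity),
              ← ENNReal.ofReal_mul (hφ.1 r hr0).le]
        _ ≤ 1 := by
            rw [← ENNReal.ofReal_one]
            exact ENNReal.ofReal_le_ofReal (real_key2 hp hφ hφ1 hr1)
end
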